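/- Every horizontal line in ℍ₁ whose direction has unit planar part can be written in the standard form: if γ(s) = (a + sA, b + sB, c + sC) is a line with A² + B² = 1 satisfying the horizontality condition z' − x'y + xy' = 0 along γ, then there exist real numbers p ≥ 0, θ ∈ [0, 2π), and t ∈ ℝ such that the image of γ equals the image of the curve s ↦ (p cos θ − s sin θ, p sin θ + s cos θ, t − s·p). -/
import Mathlib

lemma exists_theta_aux (x y : ℝ) (h : x ^ 2 + y ^ 2 = 1) :
    ∃ θ ∈ Set.Ico (0 : ℝ) (2 * Real.pi), Real.cos θ = x ∧ Real.sin θ = y := by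
  have hx1 : -1 ≤ x := by nlinarith [sq_nonneg y]
  have hx2 : x ≤ 1 := by nlinarith [sq_nonneg y]
  have hy2 : Real.sqrt (1 - x ^ 2) = |y| := by
    rw [show (1 : ℝ) - x ^ 2 = y ^ 2 by linarith, Real.sqrt_sq_eq_abs]
  rcases le_or_gt 0 y with hy | hy
  · refine ⟨Real.arccos x, ⟨Real.arccos_nonneg x, ?_⟩, Real.cos_arccos hx1 hx2, ?_⟩
    · have := Real.arccos_le_pi x
      nlinarith [Real.pi_pos]
    · rw [Real.sin_arccos, hy2, abs_of_nonneg hy]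
  · have hxlt : x < 1 := by nlinarith
    refine ⟨2 * Real.pi - Real.arccos x, ⟨?_, ?_⟩, ?_, ?_⟩
    · have := Real.arccos_le_pi x
      nlinarith [Real.pi_pos]
    · have := Real.arccos_pos.mpr hxlt
      linarith
    · rw [Real.cos_sub, Real.cos_two_pi, Real.sin_two_pi, Real.cos_arccos hx1 hx2]
      ring
    · rw [Real.sin_sub, Real.cos_two_pi, Real.sin_two_pi, Real.sin_arccos, hy2,
        abs_of_neg hy]
      ring

/-- Every horizontal line with unit planar direction can be written in the standard
form ℓ(p,θ,t) with p ≥ 0 and θ ∈ [0,2π). -/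
theorem horizontal_line_standard_form (A B C a b c : ℝ) (hAB : A ^ 2 + B ^ 2 = 1)
    (hhor : ∀ s : ℝ,
      deriv (fun s : ℝ => c + s * C) s
        - deriv (fun s : ℝ => a + s * A) s * (b + s * B)
        + (a + s * A) * deriv (fun s : ℝ => b + s * B) s = 0) :
    ∃ p θ t : ℝ, 0 ≤ p ∧ θ ∈ Set.Ico (0 : ℝ) (2 * Real.pi) ∧
      Set.range (fun s : ℝ => (a + s * A, b + s * B, c + s * C)) =
        Set.range (fun s : ℝ =>
          (p * Real.cos θ - s * Real.sin θ,
           p * Real.sin θ + s * Real.cos θ,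
           t - s * p)) := by
  have hd1 : ∀ k : ℝ, deriv (fun s : ℝ => k + s * C) = fun _ => C := by
    intro k
    funext s
    simp [deriv_const_add]
  have h0 := hhor 0
  have hdC : deriv (fun s : ℝ => c + s * C) 0 = C := by
    simpa using (((hasDerivAt_id (0:ℝ)).mul_const C).const_add c).deriv
  have hdA : deriv (fun s : ℝ => a + s * A) 0 = A := by
    simpa using (((hasDerivAt_id (0:ℝ)).mul_const A).const_add a).deriv
  have hdB : deriv (fun s : ℝ => b + s * B) 0 = B := by
    simpa using (((hasDerivAt_id (0:ℝ)).mul_const B).const_add b).deriv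
  rw [hdC, hdA, hdB] at h0
  have hC : C = A * b - a * B := by linarith [h0]
  rcases le_or_gt C 0 with hCle | hCpos
  · -- p = -C, cos θ = B, sin θ = -A
    obtain ⟨θ, hθmem, hcos, hsin⟩ := exists_theta_aux B (-A) (by nlinarith)
    refine ⟨-C, θ, c + (a * A + b * B) * (-C), by linarith, hθmem, ?_⟩
    ext P
    simp only [Set.mem_range]
    constructor
    · rintro ⟨s, rfl⟩
      refine ⟨s + (a * A + b * B), ?_⟩
      rw [hcos, hsin]
      simp only [Prod.mk.injEq]
      refine ⟨by linear_combination a * hAB + (-B) * hC, by linear_combination b * hAB + A * hC, by ring⟩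
    · rintro ⟨u, rfl⟩
      refine ⟨u - (a * A + b * B), ?_⟩
      rw [hcos, hsin]
      simp only [Prod.mk.injEq]
      refine ⟨by linear_combination (-a) * hAB + B * hC, by linear_combination (-b) * hAB + (-A) * hC, by ring⟩
  · -- p = C, cos θ = -B, sin θ = A
    obtain ⟨θ, hθmem, hcos, hsin⟩ := exists_theta_aux (-B) A (by nlinarith)
    refine ⟨C, θ, c - (a * A + b * B) * C, le_of_lt hCpos, hθmem, ?_⟩
    ext P
    simp only [Set.mem_range]
    constructor
    · rintro ⟨s, rfl⟩
      refine ⟨-(s + (a * A + b * B)), ?_⟩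
      rw [hcos, hsin]
      simp only [Prod.mk.injEq]
      refine ⟨by linear_combination a * hAB + (-B) * hC, by linear_combination b * hAB + A * hC, by ring⟩
    · rintro ⟨u, rfl⟩
      refine ⟨-u - (a * A + b * B), ?_⟩
      rw [hcos, hsin]
      simp only [Prod.mk.injEq]
      refine ⟨by linear_combination (-a) * hAB + B * hC, by linear_combination (-b) * hAB + (-A) * hC, by ring⟩
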